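/- For all real numbers a and b, the following identity for the absolute-value loss holds: |a - b| - |a| = -b(1 - 2·𝟙{a ≤ 0}) + 2∫₀ᵇ (𝟙{a ≤ t} - 𝟙{a ≤ 0}) dt, where the integral is the signed (interval) integral from 0 to b and 𝟙{·} denotes the indicator function. -/

import Mathlib

open MeasureTheory

lemma indicator_intervalIntegrable (a u v : ℝ) :
    IntervalIntegrable (fun t => if a ≤ t then (1 : ℝ) else 0) volume u v := by
  have : (fun t => if a ≤ t then (1 : ℝ) else 0) =
      Set.indicator (Set.Ici a) (fun _ => (1 : ℝ)) := by
    funext t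
    simp [Set.indicator, Set.mem_Ici]
  rw [this, intervalIntegrable_iff]
  exact (integrableOn_const measure_Ioc_lt_top.ne).indicator measurableSet_Ici

lemma indicator_integral_eq (a b : ℝ) :
    ∫ t in (0 : ℝ)..b, (if a ≤ t then (1 : ℝ) else 0) =
      max (b - a) 0 - max (0 - a) 0 := by
  have h := intervalIntegral.integral_eq_sub_of_hasDeriv_right
    (f := fun x => max (x - a) 0) (f' := fun t => if a ≤ t then (1 : ℝ) else 0)
    (a := (0 : ℝ)) (b := b) ?_ ?_ (indicator_intervalIntegrable a 0 b)
  · simpa using h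
  · exact (continuous_id.sub continuous_const).max continuous_const |>.continuousOn
  · intro x _
    by_cases hx : a ≤ x
    · simp only [if_pos hx]
      have hd : HasDerivWithinAt (fun y : ℝ => y - a) 1 (Set.Ioi x) x :=
        ((hasDerivAt_id x).sub_const a).hasDerivWithinAt
      refine hd.congr (fun y hy => ?_) ?_
      · exact max_eq_left (sub_nonneg.2 (hx.trans (le_of_lt hy)))
      · exact max_eq_left (sub_nonneg.2 hx)
    · push_neg at hx
      simp only [if_neg (not_le.2 hx)]
      have hd : HasDerivWithinAt (fun _ : ℝ => (0 : ℝ)) 0 (Set.Ioi x) x :=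
        (hasDerivAt_const x 0).hasDerivWithinAt
      refine hd.congr_of_eventuallyEq ?_ (max_eq_right (sub_nonpos.2 hx.le))
      filter_upwards [eventually_nhdsWithin_of_eventually_nhds
        (eventually_lt_nhds hx)] with y hy
      exact max_eq_right (sub_nonpos.2 hy.le)

/-- Knight-type identity for the absolute-value loss: for all real `a`, `b`,
`|a - b| - |a| = -b(1 - 2·𝟙{a ≤ 0}) + 2∫₀ᵇ (𝟙{a ≤ t} - 𝟙{a ≤ 0}) dt`,
where the integral is the signed (interval) integral from `0` to `b`. -/
theorem abs_loss_knight_identity (a b : ℝ) :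
    |a - b| - |a| =
      -b * (1 - 2 * (if a ≤ 0 then (1 : ℝ) else 0)) +
        2 * ∫ t in (0 : ℝ)..b,
          ((if a ≤ t then (1 : ℝ) else 0) - (if a ≤ 0 then (1 : ℝ) else 0)) := by
  rw [intervalIntegral.integral_sub (indicator_intervalIntegrable a 0 b)
      (intervalIntegrable_const), indicator_integral_eq,
    intervalIntegral.integral_const]
  have hmax : ∀ x : ℝ, 2 * max x 0 = |x| + x := by
    intro x
    rcases le_total x 0 with h | h
    · rw [max_eq_right h, abs_of_nonpos h]; ring
    · rw [max_eq_left h, abs_of_nonneg h]; ring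
  have h1 := hmax (b - a)
  have h2 := hmax (0 - a)
  have h3 : |b - a| = |a - b| := abs_sub_comm b a
  have h4 : |0 - a| = |a| := by rw [zero_sub, abs_neg]
  split_ifs with h5 <;> simp only [smul_eq_mul] <;> linarith
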